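/- arXiv:2209.08047 — 3 statements merged into one kernel-verified Lean document; each statement's English description precedes it below -/
import Mathlib

section
/- Let ℓ be a fixed prime. For every prime p (with p ≠ ℓ in case ℓ ≤ 3), there exists an integer n ≥ 1 such that ν_p(G_{2n}) ≥ 1. If ℓ ≤ 3, then ν_ℓ(G_{2n}) = 0 for every n ≥ 1. -/
open Finset

section helpers

variable {p : ℕ} [hp : Fact p.Prime]

lemma pvn_lt {e : ℕ} (he : e ≠ 0) : padicValNat p e < e := by
  have h1 : p ^ padicValNat p e ≤ e :=
    Nat.le_of_dvd (Nat.pos_of_ne_zero he) pow_padicValNat_dvd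
  have h2 : 2 ^ padicValNat p e ≤ p ^ padicValNat p e :=
    Nat.pow_le_pow_left hp.out.two_le _
  by_contra hc
  push_neg at hc
  have := @Nat.lt_two_pow_self e
  have : 2 ^ e ≤ 2 ^ padicValNat p e := Nat.pow_le_pow_right (by norm_num) hc
  omega

lemma pvn_add_two_le {e : ℕ} (he : 3 ≤ e) : padicValNat p e + 2 ≤ e := by
  have h1 : p ^ padicValNat p e ≤ e :=
    Nat.le_of_dvd (by omega) pow_padicValNat_dvd
  have h2 : 2 ^ padicValNat p e ≤ p ^ padicValNat p e :=
    Nat.pow_le_pow_left hp.out.two_le _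
  by_contra hc
  push_neg at hc
  have h3 : e - 1 ≤ padicValNat p e := by omega
  have h4 : 2 ^ (e - 1) ≤ 2 ^ padicValNat p e := Nat.pow_le_pow_right (by norm_num) h3
  have h5 : ∀ m : ℕ, 3 ≤ m → m < 2 ^ (m - 1) := by
    intro m hm
    induction m with
    | zero => omega
    | succ k ih =>
      rcases Nat.lt_or_ge k 3 with hk | hk
      · interval_cases k <;> simp_all <;> omega
      · have := ih (by omega)
        have hk1 : k + 1 - 1 = (k - 1) + 1 := by omega
        rw [hk1, pow_succ]
        omega
  have := h5 e he
  omega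

lemma norm_natCast' (e : ℕ) (he : e ≠ 0) :
    padicNorm p (e : ℚ) = (p : ℚ) ^ (-(padicValNat p e : ℤ)) := by
  rw [padicNorm.eq_zpow_of_nonzero (by exact_mod_cast he), padicValRat.of_nat]

end helpers

section main

variable {p : ℕ} [hp : Fact p.Prime]

lemma choose_identity (n i : ℕ) (hi : i < n) :
    (n + 1) * n.choose i = (n + 1).choose i * (n + 1 - i) := by
  have h1 := Nat.add_one_mul_choose_eq n (n - i)
  rw [Nat.choose_symm hi.le] at h1
  have h2 : n - i + 1 = n + 1 - i := by omega
  rw [h2] at h1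
  rwa [Nat.choose_symm (show i ≤ n + 1 by omega)] at h1

/-- Rewrite the `i`-th Faulhaber term. -/
lemma term_eq (n i : ℕ) (hi : i < n) :
    bernoulli i * ((n + 1).choose i : ℚ) * (p : ℚ) ^ (n + 1 - i) / ((n : ℚ) + 1) =
      bernoulli i * (n.choose i : ℚ) * ((p : ℚ) ^ (n + 1 - i) / ((n + 1 - i : ℕ) : ℚ)) := by
  have he : (((n + 1 - i : ℕ) : ℚ)) ≠ 0 := by
    have : 0 < n + 1 - i := by omega
    exact_mod_cast this.ne'
  have hn1 : ((n : ℚ) + 1) ≠ 0 := by positivity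
  have hq : ((n : ℚ) + 1) * (n.choose i : ℚ) =
      ((n + 1).choose i : ℚ) * ((n + 1 - i : ℕ) : ℚ) := by
    exact_mod_cast congrArg (Nat.cast : ℕ → ℚ) (choose_identity n i hi)
  field_simp
  linear_combination (-(bernoulli i * (p : ℚ) ^ (n + 1 - i))) * hq

lemma term_norm_le (b : ℚ) (hB : padicNorm p b ≤ p) (j : ℕ) (c e : ℕ) (he : e ≠ 0)
    (hc : padicValNat p e + c + 1 ≤ e) :
    padicNorm p (b * (j : ℚ) * ((p : ℚ) ^ e / e)) ≤ (p : ℚ) ^ (-(c : ℤ)) := by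
  have hp0 : (0 : ℚ) < p := by exact_mod_cast hp.out.pos
  have hp1 : (1 : ℚ) < p := by exact_mod_cast hp.out.one_lt
  rw [padicNorm.mul, padicNorm.mul, padicNorm.div]
  have h2 : padicNorm p ((p : ℚ) ^ e) = (p : ℚ) ^ (-(e : ℤ)) := by
    have : ((p : ℚ) ^ e) = ((p ^ e : ℕ) : ℚ) := by push_cast; ring
    rw [this, norm_natCast' _ (pow_ne_zero e hp.out.ne_zero), padicValNat.prime_pow]
  have h3 : padicNorm p (e : ℚ) = (p : ℚ) ^ (-(padicValNat p e : ℤ)) := norm_natCast' e he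
  rw [h2, h3, ← zpow_sub₀ hp0.ne']
  calc padicNorm p b * padicNorm p (j : ℚ) * (p : ℚ) ^ (-(e : ℤ) - -(padicValNat p e : ℤ))
      ≤ (p : ℚ) * 1 * (p : ℚ) ^ (-(e : ℤ) - -(padicValNat p e : ℤ)) := by
        apply mul_le_mul_of_nonneg_right _ (le_of_lt (zpow_pos hp0 _))
        exact mul_le_mul hB (padicNorm.of_nat j) (padicNorm.nonneg _)
          (le_trans (padicNorm.nonneg _) hB)
    _ = (p : ℚ) ^ ((1 : ℤ) + (-(e : ℤ) - -(padicValNat p e : ℤ))) := by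
        rw [zpow_add₀ hp0.ne', zpow_one, mul_one]
    _ ≤ (p : ℚ) ^ (-(c : ℤ)) := by
        apply zpow_le_zpow_right₀ hp1.le
        omega

/-- The Faulhaber identity solved for `p * Bₙ`. -/
lemma key_identity (n : ℕ) :
    (p : ℚ) * bernoulli n =
      (∑ k ∈ range p, (k : ℚ) ^ n) -
        ∑ i ∈ range n, bernoulli i * ((n + 1).choose i : ℚ) * (p : ℚ) ^ (n + 1 - i) / ((n : ℚ) + 1) := by
  have hF := sum_range_pow p n
  rw [Finset.sum_range_succ] at hF
  have hfn : bernoulli n * (((n + 1).choose n : ℕ) : ℚ) * (p : ℚ) ^ (n + 1 - n) / ((n : ℚ) + 1) =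
      (p : ℚ) * bernoulli n := by
    rw [Nat.choose_succ_self_right, show n + 1 - n = 1 by omega]
    have hn1 : ((n : ℚ) + 1) ≠ 0 := by positivity
    push_cast
    field_simp
  rw [hfn] at hF
  linarith [hF]

lemma bernoulli_norm_le (n : ℕ) : padicNorm p (bernoulli n) ≤ p := by
  induction n using Nat.strong_induction_on with
  | _ n IH =>
  have hp0 : (0 : ℚ) < p := by exact_mod_cast hp.out.pos
  have hp1 : (1 : ℚ) < p := by exact_mod_cast hp.out.one_lt
  have hmain : padicNorm p ((p : ℚ) * bernoulli n) ≤ 1 := by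
    rw [key_identity n]
    refine le_trans padicNorm.sub (max_le ?_ ?_)
    · have hT : (∑ k ∈ range p, (k : ℚ) ^ n) = ((∑ k ∈ range p, k ^ n : ℕ) : ℚ) := by
        push_cast; rfl
      rw [hT]
      exact padicNorm.of_nat _
    · refine padicNorm.sum_le' (fun i hi => ?_) zero_le_one
      rw [Finset.mem_range] at hi
      rw [term_eq n i hi]
      have := term_norm_le (p := p) (bernoulli i) (IH i hi) (n.choose i) 0 (n + 1 - i)
        (by omega) (by have := pvn_lt (p := p) (show n + 1 - i ≠ 0 by omega); omega)
      simpa using this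
  rw [padicNorm.mul, padicNorm.padicNorm_p_of_prime] at hmain
  calc padicNorm p (bernoulli n) = (p : ℚ) * ((p : ℚ)⁻¹ * padicNorm p (bernoulli n)) := by
        field_simp
    _ ≤ (p : ℚ) * 1 := by
        exact mul_le_mul_of_nonneg_left hmain hp0.le
    _ = p := mul_one _

lemma norm_p_pow (e : ℕ) : padicNorm p ((p : ℚ) ^ e) = (p : ℚ) ^ (-(e : ℤ)) := by
  have : ((p : ℚ) ^ e) = ((p ^ e : ℕ) : ℚ) := by push_cast; ring
  rw [this, norm_natCast' _ (pow_ne_zero e hp.out.ne_zero), padicValNat.prime_pow]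

lemma bernoulli_odd (i : ℕ) (hi : Odd i) (h1 : i ≠ 1) : bernoulli i = 0 := by
  have h2 : 1 < i := by
    rcases hi with ⟨t, rfl⟩; omega
  rw [bernoulli_eq_bernoulli'_of_ne_one h1]
  exact bernoulli'_eq_zero_of_odd hi h2

lemma key_bound (m : ℕ) (hm : Even m) (h2 : 2 ≤ m) :
    padicNorm p ((p : ℚ) * bernoulli m - ∑ k ∈ range p, (k : ℚ) ^ m) ≤ (p : ℚ)⁻¹ := by
  have hp0 : (0 : ℚ) < p := by exact_mod_cast hp.out.pos
  have hp1 : (1 : ℚ) < p := by exact_mod_cast hp.out.one_lt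
  have hinv : (p : ℚ)⁻¹ = (p : ℚ) ^ (-(1 : ℤ)) := by
    rw [zpow_neg, zpow_one]
  have heq : (p : ℚ) * bernoulli m - ∑ k ∈ range p, (k : ℚ) ^ m =
      -(∑ i ∈ range m, bernoulli i * ((m + 1).choose i : ℚ) * (p : ℚ) ^ (m + 1 - i) / ((m : ℚ) + 1)) := by
    rw [key_identity m]; ring
  rw [heq, padicNorm.neg, hinv]
  refine padicNorm.sum_le' (fun i hi => ?_) (by positivity)
  rw [Finset.mem_range] at hi
  by_cases h1 : i = 1
  · subst h1
    have hterm : bernoulli 1 * ((m + 1).choose 1 : ℚ) * (p : ℚ) ^ (m + 1 - 1) / ((m : ℚ) + 1) =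
        -((p : ℚ) ^ m / 2) := by
      rw [bernoulli_one, Nat.choose_one_right, show m + 1 - 1 = m from rfl]
      have hn1 : ((m : ℚ) + 1) ≠ 0 := by positivity
      push_cast
      field_simp
    rw [hterm, padicNorm.neg, padicNorm.div, norm_p_pow]
    have h2norm : padicNorm p (2 : ℚ) = (p : ℚ) ^ (-(padicValNat p 2 : ℤ)) := by
      have := norm_natCast' (p := p) 2 (by norm_num)
      simpa using this
    rw [h2norm, ← zpow_sub₀ hp0.ne']
    apply zpow_le_zpow_right₀ hp1.le
    have := pvn_lt (p := p) (show (2 : ℕ) ≠ 0 by norm_num)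
    omega
  · rcases Nat.even_or_odd i with hie | hio
    · -- i even, so m + 1 - i ≥ 3
      have he3 : 3 ≤ m + 1 - i := by
        rcases hm with ⟨a, ha⟩; rcases hie with ⟨b, hb⟩; omega
      rw [term_eq m i hi]
      have := term_norm_le (p := p) (bernoulli i) (bernoulli_norm_le i) (m.choose i) 1
        (m + 1 - i) (by omega) (by have := pvn_add_two_le (p := p) he3; omega)
      simpa using this
    · rw [bernoulli_odd i hio h1]
      simp [padicNorm.nonneg, le_of_lt (zpow_pos hp0 _), zpow_pos hp0 (-(1:ℤ))]

lemma norm_p_mul_bernoulli (hp23 : p = 2 ∨ p = 3) (m : ℕ) (hm : Even m) (h2 : 2 ≤ m) :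
    padicNorm p ((p : ℚ) * bernoulli m) = 1 := by
  have hp0 : (0 : ℚ) < p := by exact_mod_cast hp.out.pos
  have hp1 : (1 : ℚ) < p := by exact_mod_cast hp.out.one_lt
  have hpinv : (p : ℚ)⁻¹ < 1 := by
    rw [inv_lt_one_iff₀]; right; exact hp1
  have hdvd : p ∣ (∑ k ∈ range p, k ^ m) + 1 := by
    rcases hp23 with rfl | rfl
    · have : (∑ k ∈ range 2, k ^ m) = 1 := by
        rw [Finset.sum_range_succ, Finset.sum_range_one, zero_pow (by omega), one_pow]
        omega
      omega
    · have hsum : (∑ k ∈ range 3, k ^ m) = 1 + 2 ^ m := by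
        rw [Finset.sum_range_succ, Finset.sum_range_succ, Finset.sum_range_one,
          zero_pow (by omega), one_pow]
        omega
      rw [hsum]
      rcases hm with ⟨t, rfl⟩
      have h4 : (2 : ℕ) ^ (t + t) = 4 ^ t := by rw [← two_mul, pow_mul]; norm_num
      rw [h4]
      have hmod : (4 : ℕ) ^ t ≡ 1 ^ t [MOD 3] := Nat.ModEq.pow t (by decide)
      have : (4 : ℕ) ^ t % 3 = 1 := by simpa [Nat.ModEq] using hmod
      omega
  have hT1 : padicNorm p ((∑ k ∈ range p, (k : ℚ) ^ m) + 1) ≤ (p : ℚ)⁻¹ := by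
    have hcast : (∑ k ∈ range p, (k : ℚ) ^ m) + 1 = ((((∑ k ∈ range p, k ^ m) + 1 : ℕ) : ℤ) : ℚ) := by
      push_cast; ring
    rw [hcast]
    have := (padicNorm.dvd_iff_norm_le (p := p) (n := 1)
      (z := (((∑ k ∈ range p, k ^ m) + 1 : ℕ) : ℤ))).mp (by exact_mod_cast Int.natCast_dvd_natCast.mpr (by simpa using hdvd))
    simpa [zpow_neg, zpow_one] using this
  have hK := key_bound (p := p) m hm h2
  have hsum : padicNorm p ((p : ℚ) * bernoulli m + 1) ≤ (p : ℚ)⁻¹ := by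
    have hre : (p : ℚ) * bernoulli m + 1 =
        ((p : ℚ) * bernoulli m - ∑ k ∈ range p, (k : ℚ) ^ m) +
          ((∑ k ∈ range p, (k : ℚ) ^ m) + 1) := by ring
    rw [hre]
    exact le_trans padicNorm.nonarchimedean (max_le hK hT1)
  have hre2 : (p : ℚ) * bernoulli m = ((p : ℚ) * bernoulli m + 1) + (-1) := by ring
  rw [hre2, padicNorm.add_eq_max_of_ne]
  · rw [padicNorm.neg, padicNorm.one]
    exact max_eq_right (le_trans hsum hpinv.le)
  · rw [padicNorm.neg, padicNorm.one]
    exact ne_of_lt (lt_of_le_of_lt hsum hpinv)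

end main

lemma bernoulli_even_ne_zero (m : ℕ) (hm : Even m) (h2 : 2 ≤ m) : bernoulli m ≠ 0 := by
  intro h
  have := norm_p_mul_bernoulli (p := 2) (Or.inl rfl) m hm h2
  rw [h, mul_zero, padicNorm.zero] at this
  norm_num at this

section conv

variable {p : ℕ} [hp : Fact p.Prime]

lemma le_padicValRat_of_norm_le {q : ℚ} (hq : q ≠ 0) {c : ℤ}
    (h : padicNorm p q ≤ (p : ℚ) ^ (-c)) : c ≤ padicValRat p q := by
  have hp1 : (1 : ℚ) < p := by exact_mod_cast hp.out.one_lt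
  rw [padicNorm.eq_zpow_of_nonzero hq, zpow_le_zpow_iff_right₀ hp1] at h
  omega

lemma padicValRat_eq_of_norm {q : ℚ} (hq : q ≠ 0) {c : ℤ}
    (h : padicNorm p q = (p : ℚ) ^ (-c)) : padicValRat p q = c := by
  have hp1 : (1 : ℚ) < p := by exact_mod_cast hp.out.one_lt
  rw [padicNorm.eq_zpow_of_nonzero hq] at h
  have := zpow_right_injective₀ (lt_trans zero_lt_one hp1) hp1.ne' h
  omega

end conv

/-- The `ℓ`-Genocchi number `G_{2n} = ℓ(1 - ℓ^{2n})B_{2n}` (an integer). -/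
noncomputable def Gnum (ℓ : ℕ) (n : ℕ) : ℚ :=
  (ℓ : ℚ) * (1 - (ℓ : ℚ) ^ (2 * n)) * bernoulli (2 * n)

lemma Gnum_factor_ne_zero {ℓ : ℕ} (hℓ : ℓ.Prime) (n : ℕ) (hn : 1 ≤ n) :
    (ℓ : ℚ) ≠ 0 ∧ (1 - (ℓ : ℚ) ^ (2 * n)) ≠ 0 ∧ bernoulli (2 * n) ≠ 0 := by
  refine ⟨by exact_mod_cast hℓ.ne_zero, ?_, bernoulli_even_ne_zero (2 * n) (even_two_mul n) (by omega)⟩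
  have h1 : (1 : ℚ) < (ℓ : ℚ) ^ (2 * n) := by
    apply one_lt_pow₀ (by exact_mod_cast hℓ.one_lt) (by omega)
  linarith

lemma not_dvd_one_sub_pow {ℓ p : ℕ} (hℓ2 : 2 ≤ ℓ) (hp : p.Prime) (hdvd : p ∣ ℓ) (m : ℕ)
    (hm : 1 ≤ m) : ¬ (p : ℤ) ∣ (1 - (ℓ : ℤ) ^ m) := by
  intro h
  have h2 : (p : ℤ) ∣ (ℓ : ℤ) ^ m := dvd_pow (Int.natCast_dvd_natCast.mpr hdvd) (by omega)
  have h3 : (p : ℤ) ∣ 1 := by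
    have := dvd_add h h2
    simpa using this
  have := Int.le_of_dvd one_pos h3
  have := hp.two_le
  omega

/-- Let `ℓ` be a fixed prime. For every prime `p` (with `p ≠ ℓ` in case `ℓ ≤ 3`),
there exists `n ≥ 1` with `ν_p(G_{2n}) ≥ 1`. If `ℓ ≤ 3`, then `ν_ℓ(G_{2n}) = 0`
for every `n ≥ 1`. -/
theorem exists_padicValRat_Gnum_pos (ℓ : ℕ) (hℓ : ℓ.Prime) :
    (∀ p : ℕ, p.Prime → (ℓ ≤ 3 → p ≠ ℓ) →
      ∃ n : ℕ, 1 ≤ n ∧ 1 ≤ padicValRat p (Gnum ℓ n)) ∧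
    (ℓ ≤ 3 → ∀ n : ℕ, 1 ≤ n → padicValRat ℓ (Gnum ℓ n) = 0) := by
  haveI : Fact ℓ.Prime := ⟨hℓ⟩
  constructor
  · intro p hp hne
    haveI : Fact p.Prime := ⟨hp⟩
    have hp0 : (0 : ℚ) < p := by exact_mod_cast hp.pos
    by_cases hpl : p = ℓ
    · -- p = ℓ, so ℓ ≥ 4 (hence ℓ ∤ 6)
      subst hpl
      have hℓ4 : 4 ≤ p := by
        by_contra hc
        exact (hne (by omega)) rfl
      refine ⟨1, le_refl 1, ?_⟩
      obtain ⟨h0, h1, h2⟩ := Gnum_factor_ne_zero hℓ 1 le_rfl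
      have hb2 : bernoulli (2 * 1) = (6 : ℚ)⁻¹ := by
        rw [show 2 * 1 = 2 from rfl, bernoulli_eq_bernoulli'_of_ne_one (by norm_num),
          bernoulli'_two]
        norm_num
      have hnorm : padicNorm p (Gnum p 1) = (p : ℚ) ^ (-(1 : ℤ)) := by
        rw [Gnum, padicNorm.mul, padicNorm.mul, hb2]
        have e1 : padicNorm p (p : ℚ) = (p : ℚ)⁻¹ := padicNorm.padicNorm_p_of_prime
        have e2 : padicNorm p (1 - (p : ℚ) ^ (2 * 1)) = 1 := by
          have hc : (1 - (p : ℚ) ^ (2 * 1)) = (((1 - (p : ℤ) ^ (2 * 1)) : ℤ) : ℚ) := by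
            push_cast; ring
          rw [hc, padicNorm.int_eq_one_iff]
          exact not_dvd_one_sub_pow hℓ.two_le hp dvd_rfl (2 * 1) (by omega)
        have e3 : padicNorm p ((6 : ℚ)⁻¹) = 1 := by
          have h6 : padicNorm p (6 : ℚ) = 1 := by
            have hc6 : ((6 : ℕ) : ℚ) = (6 : ℚ) := by norm_num
            rw [← hc6, padicNorm.nat_eq_one_iff]
            intro hdvd
            have hle := Nat.le_of_dvd (by norm_num) hdvd
            interval_cases p
            · omega
            · omega
            · exact absurd hℓ (by norm_num)
          rw [inv_eq_one_div, padicNorm.div, padicNorm.one, h6]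
          norm_num
        rw [e1, e2, e3, mul_one, mul_one, zpow_neg, zpow_one]
      have := padicValRat_eq_of_norm (p := p)
        (by rw [Gnum]; exact mul_ne_zero (mul_ne_zero h0 h1) h2) hnorm
      omega
    · -- p ≠ ℓ
      set n := p * (p - 1) with hn_def
      have hn1 : 1 ≤ n := by
        have := hp.two_le
        have : 1 ≤ p - 1 := by omega
        exact Nat.one_le_iff_ne_zero.mpr (by positivity)
      refine ⟨n, hn1, ?_⟩
      obtain ⟨h0, h1, h2⟩ := Gnum_factor_ne_zero hℓ n hn1
      have hGne : Gnum ℓ n ≠ 0 := by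
        rw [Gnum]; exact mul_ne_zero (mul_ne_zero h0 h1) h2
      -- divisibility p² ∣ 1 - ℓ^{2n}
      have hco : Nat.Coprime ℓ (p ^ 2) :=
        Nat.Coprime.pow_right 2 ((Nat.coprime_primes hℓ hp).mpr (fun h => hpl h.symm))
      have heuler : ℓ ^ (p ^ 2).totient ≡ 1 [MOD p ^ 2] := Nat.ModEq.pow_totient hco
      have htot : (p ^ 2).totient = n := by
        rw [hn_def, Nat.totient_prime_pow hp (by norm_num)]
        norm_num
      rw [htot] at heuler
      have heuler2 : ℓ ^ (2 * n) ≡ 1 [MOD p ^ 2] := by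
        have := heuler.pow 2
        rwa [← pow_mul, one_pow, mul_comm n 2] at this
      have hdvd2 : ((p ^ 2 : ℕ) : ℤ) ∣ (1 - (ℓ : ℤ) ^ (2 * n)) := by
        have h := heuler2.dvd
        push_cast at h
        exact_mod_cast h
      have hnx : padicNorm p (1 - (ℓ : ℚ) ^ (2 * n)) ≤ (p : ℚ) ^ (-(2 : ℤ)) := by
        have hc : (1 - (ℓ : ℚ) ^ (2 * n)) = (((1 - (ℓ : ℤ) ^ (2 * n)) : ℤ) : ℚ) := by
          push_cast; ring
        rw [hc]
        have := (padicNorm.dvd_iff_norm_le (p := p) (n := 2)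
          (z := 1 - (ℓ : ℤ) ^ (2 * n))).mp (by exact_mod_cast hdvd2)
        exact_mod_cast this
      have hnl : padicNorm p (ℓ : ℚ) = 1 := by
        rw [show ((ℓ : ℚ)) = (((ℓ : ℤ)) : ℚ) by push_cast; ring, padicNorm.int_eq_one_iff]
        exact_mod_cast (Nat.Prime.coprime_iff_not_dvd hp).mp
          ((Nat.coprime_primes hp hℓ).mpr hpl)
      have hnb : padicNorm p (bernoulli (2 * n)) ≤ (p : ℚ) ^ (1 : ℤ) := by
        rw [zpow_one]; exact bernoulli_norm_le (2 * n)
      have hnorm : padicNorm p (Gnum ℓ n) ≤ (p : ℚ) ^ (-(1 : ℤ)) := by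
        rw [Gnum, padicNorm.mul, padicNorm.mul, hnl, one_mul]
        calc padicNorm p (1 - (ℓ : ℚ) ^ (2 * n)) * padicNorm p (bernoulli (2 * n))
            ≤ (p : ℚ) ^ (-(2 : ℤ)) * (p : ℚ) ^ (1 : ℤ) :=
              mul_le_mul hnx hnb (padicNorm.nonneg _) (le_of_lt (zpow_pos hp0 _))
          _ = (p : ℚ) ^ (-(1 : ℤ)) := by
              rw [← zpow_add₀ hp0.ne']; norm_num
      exact le_padicValRat_of_norm_le hGne hnorm
  · intro hℓ3 n hn
    have hℓ23 : ℓ = 2 ∨ ℓ = 3 := by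
      have := hℓ.two_le
      interval_cases ℓ
      · exact Or.inl rfl
      · exact Or.inr rfl
    obtain ⟨h0, h1, h2⟩ := Gnum_factor_ne_zero hℓ n hn
    have hGne : Gnum ℓ n ≠ 0 := by
      rw [Gnum]; exact mul_ne_zero (mul_ne_zero h0 h1) h2
    have hnorm : padicNorm ℓ (Gnum ℓ n) = (ℓ : ℚ) ^ (-(0 : ℤ)) := by
      have hre : Gnum ℓ n = ((ℓ : ℚ) * bernoulli (2 * n)) * (1 - (ℓ : ℚ) ^ (2 * n)) := by
        rw [Gnum]; ring
      rw [hre, padicNorm.mul,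
        norm_p_mul_bernoulli hℓ23 (2 * n) (even_two_mul n) (by omega), one_mul]
      have hc : (1 - (ℓ : ℚ) ^ (2 * n)) = (((1 - (ℓ : ℤ) ^ (2 * n)) : ℤ) : ℚ) := by
        push_cast; ring
      rw [hc, show (-(0:ℤ)) = 0 by ring, zpow_zero, padicNorm.int_eq_one_iff]
      exact not_dvd_one_sub_pow hℓ.two_le hℓ dvd_rfl (2 * n) (by omega)
    exact padicValRat_eq_of_norm hGne hnorm
end

section
/- Let ℓ be a prime. An odd prime p with p ≠ ℓ is ℓ-Genocchi regular if and only if p is B-regular and ord_p(ℓ²) = (p−1)/2. -/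
open Finset IsUltrametricDist

-- norm of natural number cast is ≥ 1/r
lemma le_norm_natCast (p : ℕ) [hp : Fact p.Prime] (r : ℕ) (hr : 0 < r) :
    ((r : ℝ))⁻¹ ≤ ‖((r : ℕ) : ℚ_[p])‖ := by
  set v := r.factorization p with hv
  have hdecomp : p ^ v * (r / p ^ v) = r := Nat.ordProj_mul_ordCompl_eq_self r p
  set u := r / p ^ v with hu
  have hpu : ¬ p ∣ u := Nat.not_dvd_ordCompl hp.out hr.ne'
  have hunorm : ‖((u : ℕ) : ℚ_[p])‖ = 1 := by
    have h1 : ‖((u : ℤ) : ℚ_[p])‖ ≤ 1 := Padic.norm_int_le_one _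
    have h2 : ¬ ‖((u : ℤ) : ℚ_[p])‖ < 1 := by
      rw [Padic.norm_intCast_lt_one_iff]
      exact_mod_cast hpu
    push_cast at h1 h2 ⊢
    linarith [lt_or_eq_of_le h1]
  have : ((r : ℕ) : ℚ_[p]) = (p : ℚ_[p]) ^ v * (u : ℚ_[p]) := by
    rw [← hdecomp]; push_cast; ring
  rw [this, norm_mul, norm_pow, hunorm, mul_one, Padic.norm_p]
  have hple : (p : ℝ) ^ v ≤ r := by
    exact_mod_cast Nat.le_of_dvd hr (Nat.ordProj_dvd r p)
  have hp1 : (0:ℝ) < (p:ℝ) := by exact_mod_cast hp.out.pos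
  have hppos : (0:ℝ) < (p:ℝ) ^ v := pow_pos hp1 v
  rw [inv_pow, ← one_div, ← one_div]
  apply div_le_div_of_nonneg_left _ hppos hple <;> norm_num

lemma nat_lt_pow_pred (p r : ℕ) (hp3 : 3 ≤ p) (hr : 2 ≤ r) : r < p ^ (r - 1) := by
  have h3 : r < 3 ^ (r - 1) := by
    induction r with
    | zero => omega
    | succ n ih =>
      rcases Nat.lt_or_ge n 2 with h | h
      · interval_cases n
        · omega
        · norm_num
      · have := ih (by omega)
        have hn : n - 1 + 1 = n := by omega
        calc n + 1 < 3 ^ (n - 1) + 1 := by omega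
          _ ≤ 3 ^ n := by
            have : 3 ^ (n-1) * 3 ≤ 3 ^ n := by rw [← pow_succ, hn]
            have h1 : 1 ≤ 3 ^ (n-1) := Nat.one_le_pow _ _ (by norm_num)
            omega
  calc r < 3 ^ (r-1) := h3
    _ ≤ p ^ (r-1) := Nat.pow_le_pow_left hp3 _

lemma key_cong (p : ℕ) [hp : Fact p.Prime] (hp3 : 3 ≤ p) (m : ℕ) :
    ‖(p : ℚ_[p]) * ((bernoulli m : ℚ) : ℚ_[p]) - ∑ x ∈ Finset.range p, ((x : ℕ) : ℚ_[p]) ^ m‖ < 1 := by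
  induction m using Nat.strong_induction_on with
  | _ m IH =>
  have hppos : (0:ℝ) < (p:ℝ) := by exact_mod_cast hp.out.pos
  have hSle : ∀ i : ℕ, ‖∑ x ∈ Finset.range p, ((x:ℕ) : ℚ_[p]) ^ i‖ ≤ 1 := by
    intro i
    apply norm_sum_le_of_forall_le_of_nonneg zero_le_one
    intro x _
    rw [norm_pow]
    apply pow_le_one₀ (norm_nonneg _)
    exact_mod_cast Padic.norm_int_le_one (x : ℤ)
  have hBle : ∀ i, i < m → ‖((bernoulli i : ℚ) : ℚ_[p])‖ ≤ p := by
    intro i hi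
    have h1 := IH i hi
    have h2 : ‖(p : ℚ_[p]) * ((bernoulli i : ℚ) : ℚ_[p])‖ ≤ 1 := by
      have := (norm_add_le_max ((p : ℚ_[p]) * ((bernoulli i : ℚ) : ℚ_[p]) - ∑ x ∈ Finset.range p, ((x:ℕ) : ℚ_[p]) ^ i) (∑ x ∈ Finset.range p, ((x:ℕ) : ℚ_[p]) ^ i))
      rw [sub_add_cancel] at this
      exact this.trans (max_le h1.le (hSle i))
    rw [norm_mul, Padic.norm_p] at h2
    calc ‖((bernoulli i : ℚ) : ℚ_[p])‖ = (p:ℝ) * ((p:ℝ)⁻¹ * ‖((bernoulli i : ℚ) : ℚ_[p])‖) := by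
          field_simp
      _ ≤ (p:ℝ) * 1 := by
          apply mul_le_mul_of_nonneg_left h2 hppos.le
      _ = p := mul_one _
  -- Faulhaber
  have F : (∑ x ∈ Finset.range p, ((x:ℕ) : ℚ_[p]) ^ m) =
      ∑ i ∈ Finset.range (m+1), ((bernoulli i : ℚ) : ℚ_[p]) * ((m+1).choose i : ℚ_[p]) * (p : ℚ_[p]) ^ (m+1-i) / ((m : ℚ_[p]) + 1) := by
    have h := sum_range_pow p m
    have h2 := congrArg (fun q : ℚ => (q : ℚ_[p])) h
    push_cast at h2 ⊢
    convert h2 using 2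
  rw [Finset.sum_range_succ] at F
  have hm1 : ((m : ℚ_[p]) + 1) ≠ 0 := by
    have h : (((m+1 : ℕ)) : ℚ_[p]) ≠ 0 := Nat.cast_ne_zero.mpr m.succ_ne_zero
    push_cast at h
    exact h
  have hlast : ((bernoulli m : ℚ) : ℚ_[p]) * ((m+1).choose m : ℚ_[p]) * (p : ℚ_[p]) ^ (m+1-m) / ((m : ℚ_[p]) + 1)
      = (p : ℚ_[p]) * ((bernoulli m : ℚ) : ℚ_[p]) := by
    rw [Nat.choose_succ_self_right, show m + 1 - m = 1 from by omega]
    push_cast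
    field_simp
  have hdiff : (p : ℚ_[p]) * ((bernoulli m : ℚ) : ℚ_[p]) - ∑ x ∈ Finset.range p, ((x:ℕ) : ℚ_[p]) ^ m
      = -∑ i ∈ Finset.range m, ((bernoulli i : ℚ) : ℚ_[p]) * ((m+1).choose i : ℚ_[p]) * (p : ℚ_[p]) ^ (m+1-i) / ((m : ℚ_[p]) + 1) := by
    rw [F, hlast]; ring
  rw [hdiff, norm_neg]
  have hinvlt : (p:ℝ)⁻¹ < 1 := by
    rw [inv_lt_one_iff₀]; right; exact_mod_cast hp.out.one_lt
  refine lt_of_le_of_lt (norm_sum_le_of_forall_le_of_nonneg (by positivity) ?_) hinvlt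
  intro i hi
  rw [Finset.mem_range] at hi
  have hr2 : 2 ≤ m + 1 - i := by omega
  rw [show ((p:ℝ))⁻¹ = (p:ℝ) ^ (-1 : ℤ) from by norm_num,
    Padic.norm_le_pow_iff_norm_lt_pow_add_one,
    show (-1 + 1 : ℤ) = 0 from by norm_num, zpow_zero]
  -- rewrite the term using the choose identity
  have hrne : (((m + 1 - i : ℕ)) : ℚ_[p]) ≠ 0 := by
    exact Nat.cast_ne_zero.mpr (by omega)
  have hch : ((m.choose i : ℚ_[p])) * ((m : ℚ_[p]) + 1) = ((m+1).choose i : ℚ_[p]) * ((m + 1 - i : ℕ) : ℚ_[p]) := by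
    have := Nat.choose_mul_succ_eq m i
    exact_mod_cast congrArg (fun n : ℕ => (n : ℚ_[p])) this
  have hTi : ((bernoulli i : ℚ) : ℚ_[p]) * ((m+1).choose i : ℚ_[p]) * (p : ℚ_[p]) ^ (m+1-i) / ((m : ℚ_[p]) + 1)
      = ((bernoulli i : ℚ) : ℚ_[p]) * (m.choose i : ℚ_[p]) * (p : ℚ_[p]) ^ (m+1-i) / ((m + 1 - i : ℕ) : ℚ_[p]) := by
    rw [div_eq_div_iff hm1 hrne]
    linear_combination (((bernoulli i : ℚ) : ℚ_[p]) * (p : ℚ_[p]) ^ (m+1-i)) * hch.symm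
  rw [hTi, norm_div, norm_mul, norm_mul, norm_pow, Padic.norm_p]
  have hnr : (0:ℝ) < ‖(((m + 1 - i : ℕ)) : ℚ_[p])‖ := norm_pos_iff.mpr hrne
  rw [div_lt_one hnr]
  have hBC : ‖((bernoulli i : ℚ) : ℚ_[p])‖ * ‖((m.choose i : ℚ_[p]))‖ ≤ p := by
    have h1 := hBle i hi
    have h2 : ‖((m.choose i : ℚ_[p]))‖ ≤ 1 := by
      exact_mod_cast Padic.norm_int_le_one ((m.choose i : ℤ))
    calc ‖((bernoulli i : ℚ) : ℚ_[p])‖ * ‖((m.choose i : ℚ_[p]))‖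
        ≤ (p:ℝ) * 1 := mul_le_mul h1 h2 (norm_nonneg _) hppos.le
      _ = p := mul_one _
  have hlt : ((m + 1 - i : ℕ):ℝ) < (p:ℝ) ^ (m + 1 - i - 1) := by
    exact_mod_cast nat_lt_pow_pred p (m + 1 - i) hp3 hr2
  have hkey : (p:ℝ) * ((p:ℝ)⁻¹) ^ (m+1-i) < (((m + 1 - i : ℕ)):ℝ)⁻¹ := by
    have hpow : (p:ℝ) ^ (m+1-i) = (p:ℝ) ^ (m + 1 - i - 1) * p := by
      rw [← pow_succ]; congr 1; omega
    have hppow : (0:ℝ) < (p:ℝ) ^ (m + 1 - i - 1) := pow_pos hppos _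
    have hrpos : (0:ℝ) < ((m + 1 - i : ℕ):ℝ) := by exact_mod_cast Nat.pos_of_ne_zero (fun h => by omega)
    rw [inv_pow, hpow]
    rw [mul_inv, ← mul_assoc, mul_comm ((p:ℝ)) _, mul_assoc, mul_inv_cancel₀ hppos.ne', mul_one]
    exact inv_strictAnti₀ hrpos hlt
  have hle : (((m + 1 - i : ℕ)):ℝ)⁻¹ ≤ ‖(((m + 1 - i : ℕ)) : ℚ_[p])‖ :=
    le_norm_natCast p _ (by omega)
  calc ‖((bernoulli i : ℚ) : ℚ_[p])‖ * ‖((m.choose i : ℚ_[p]))‖ * ((p:ℝ)⁻¹) ^ (m+1-i)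
      ≤ (p:ℝ) * ((p:ℝ)⁻¹) ^ (m+1-i) := mul_le_mul_of_nonneg_right hBC (by positivity)
    _ < (((m + 1 - i : ℕ)):ℝ)⁻¹ := hkey
    _ ≤ ‖(((m + 1 - i : ℕ)) : ℚ_[p])‖ := hle

lemma S_cast_eq (p m : ℕ) [hp : Fact p.Prime] : (∑ x ∈ Finset.range p, ((x:ℕ) : ℚ_[p]) ^ m)
    = ((∑ x ∈ Finset.range p, (x:ℤ)^m : ℤ) : ℚ_[p]) := by push_cast; rfl

lemma S_dvd (p : ℕ) [hp : Fact p.Prime] {m : ℕ} (hmlt : m < p - 1) :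
    (p:ℤ) ∣ ∑ x ∈ Finset.range p, (x:ℤ)^m := by
  haveI : NeZero p := ⟨hp.out.ne_zero⟩
  rw [← ZMod.intCast_zmod_eq_zero_iff_dvd]
  push_cast
  have hreindex : (∑ x ∈ Finset.range p, ((x:ℕ) : ZMod p)^m) = ∑ y : ZMod p, y^m := by
    exact Finset.sum_nbij' (fun i => ((i:ℕ) : ZMod p)) (fun y => y.val)
      (fun a _ => Finset.mem_univ _)
      (fun a _ => Finset.mem_range.mpr (ZMod.val_lt a))
      (fun a ha => ZMod.val_natCast_of_lt (Finset.mem_range.mp ha))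
      (fun a _ => ZMod.natCast_rightInverse a)
      (fun a _ => rfl)
  rw [hreindex]
  apply FiniteField.sum_pow_lt_card_sub_one
  rwa [ZMod.card]

lemma bern_norm_le (p : ℕ) [hp : Fact p.Prime] (hp3 : 3 ≤ p) {m : ℕ} (hmlt : m < p - 1) :
    ‖((bernoulli m : ℚ) : ℚ_[p])‖ ≤ 1 := by
  have hS : ‖∑ x ∈ Finset.range p, ((x:ℕ) : ℚ_[p]) ^ m‖ < 1 := by
    rw [S_cast_eq, Padic.norm_intCast_lt_one_iff]
    exact S_dvd p hmlt
  have h2 : ‖(p : ℚ_[p]) * ((bernoulli m : ℚ) : ℚ_[p])‖ < 1 := by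
    have h3 := (norm_add_le_max ((p : ℚ_[p]) * ((bernoulli m : ℚ) : ℚ_[p]) - ∑ x ∈ Finset.range p, ((x:ℕ) : ℚ_[p]) ^ m) (∑ x ∈ Finset.range p, ((x:ℕ) : ℚ_[p]) ^ m))
    rw [sub_add_cancel] at h3
    exact h3.trans_lt (max_lt (key_cong p hp3 m) hS)
  have h4 : ‖(p : ℚ_[p]) * ((bernoulli m : ℚ) : ℚ_[p])‖ ≤ (p:ℝ)^(-1:ℤ) := by
    rw [Padic.norm_le_pow_iff_norm_lt_pow_add_one, show (-1 + 1 : ℤ) = 0 from by norm_num,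
      zpow_zero]
    exact h2
  rw [norm_mul, Padic.norm_p] at h4
  have hppos : (0:ℝ) < (p:ℝ) := by exact_mod_cast hp.out.pos
  calc ‖((bernoulli m : ℚ) : ℚ_[p])‖ = (p:ℝ) * ((p:ℝ)⁻¹ * ‖((bernoulli m : ℚ) : ℚ_[p])‖) := by
        field_simp
    _ ≤ (p:ℝ) * (p:ℝ)^(-1:ℤ) := mul_le_mul_of_nonneg_left h4 hppos.le
    _ = 1 := by rw [zpow_neg_one]; field_simp

lemma bernoulli_two_mul_ne_zero {k : ℕ} (hk : 0 < k) : bernoulli (2*k) ≠ 0 := by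
  have h2 : ((2:ZMod 3))^2 = 1 := by decide
  have h3 : ((1:ZMod 3)) + 1 ≠ 0 := by decide
  haveI : Fact (Nat.Prime 3) := ⟨by norm_num⟩
  intro h
  have hkey := key_cong 3 le_rfl (2*k)
  rw [h] at hkey
  rw [Rat.cast_zero, mul_zero, zero_sub, norm_neg, S_cast_eq,
    Padic.norm_intCast_lt_one_iff] at hkey
  rw [show (3:ℕ) = 2 + 1 from rfl, Finset.sum_range_succ, Finset.sum_range_succ,
    Finset.sum_range_one] at hkey
  have h0 : ((0:ℕ):ℤ)^(2*k) = 0 := by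
    rw [pow_mul]; norm_num; omega
  rw [h0] at hkey
  norm_num at hkey
  have hkey2 : ((1 + 2^(2*k) : ℤ) : ZMod 3) = 0 :=
    (ZMod.intCast_zmod_eq_zero_iff_dvd _ 3).mpr (by exact_mod_cast hkey)
  rename' hkey2 => hkey
  push_cast at hkey
  rw [pow_mul, h2, one_pow] at hkey
  exact h3 hkey

lemma one_le_padicValRat_iff (p : ℕ) [hp : Fact p.Prime] (q : ℚ) :
    1 ≤ padicValRat p q ↔ q ≠ 0 ∧ ‖(q : ℚ_[p])‖ < 1 := by
  rcases eq_or_ne q 0 with rfl | hq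
  · simp [padicValRat.zero]
  · rw [Padic.eq_padicNorm, padicNorm.eq_zpow_of_nonzero hq]
    have hp1 : (1:ℝ) < p := by exact_mod_cast hp.out.one_lt
    have hcast : (((p:ℚ) ^ (-padicValRat p q) : ℚ) : ℝ) = (p:ℝ) ^ (-padicValRat p q) := by
      push_cast; ring
    rw [hcast, show (1:ℝ) = (p:ℝ)^(0:ℤ) from (zpow_zero _).symm,
      zpow_lt_zpow_iff_right₀ hp1]
    constructor
    · intro h; exact ⟨hq, by omega⟩
    · intro h; omega


/-- An odd prime `p` is `B`-irregular if `ν_p(B_{2k}) ≥ 1` for some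
`1 ≤ k ≤ (p-3)/2`. -/
def BIrregular (p : ℕ) : Prop :=
  ∃ k : ℕ, 1 ≤ k ∧ k ≤ (p - 3) / 2 ∧ 1 ≤ padicValRat p (bernoulli (2 * k))

/-- An odd prime `p` is `ℓ`-Genocchi irregular if `p` divides one of
`G_2, G_4, …, G_{p-3}`, i.e. `ν_p(G_{2k}) ≥ 1` for some `1 ≤ k ≤ (p-3)/2`. -/
noncomputable def GenocchiIrregular (ℓ : ℕ) (p : ℕ) : Prop :=
  ∃ k : ℕ, 1 ≤ k ∧ k ≤ (p - 3) / 2 ∧ 1 ≤ padicValRat p (Gnum ℓ k)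

/-- Let `ℓ` be a prime. An odd prime `p ≠ ℓ` is `ℓ`-Genocchi regular iff `p` is
`B`-regular and `ord_p(ℓ²) = (p-1)/2`. -/
theorem GenocchiRegular_iff (ℓ p : ℕ) (hℓ : ℓ.Prime) (hp : p.Prime)
    (hodd : Odd p) (hne : p ≠ ℓ) :
    ¬ GenocchiIrregular ℓ p ↔
      ¬ BIrregular p ∧ orderOf ((ℓ : ZMod p) ^ 2) = (p - 1) / 2 := by
  haveI hpf : Fact p.Prime := ⟨hp⟩
  obtain ⟨t, ht⟩ := hodd
  have hp3 : 3 ≤ p := by have h2 := hp.two_le; omega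
  have hLne : (ℓ : ZMod p) ≠ 0 := by
    rw [Ne, ZMod.natCast_eq_zero_iff]
    intro hdvd
    exact hne ((Nat.prime_dvd_prime_iff_eq hp hℓ).mp hdvd)
  set d := orderOf ((ℓ : ZMod p) ^ 2) with hd
  have hdd : d ∣ (p - 1) / 2 := by
    rw [hd, orderOf_dvd_iff_pow_eq_one, ← pow_mul,
      show 2 * ((p - 1) / 2) = p - 1 from by omega]
    exact ZMod.pow_card_sub_one_eq_one hLne
  have hdpos : 0 < d := by
    refine IsOfFinOrder.orderOf_pos ?_
    rw [isOfFinOrder_iff_pow_eq_one]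
    refine ⟨(p - 1) / 2, by omega, ?_⟩
    rw [← pow_mul, show 2 * ((p - 1) / 2) = p - 1 from by omega]
    exact ZMod.pow_card_sub_one_eq_one hLne
  have hℓnorm : ‖((ℓ : ℕ) : ℚ_[p])‖ = 1 := by
    have h1 : ‖((ℓ : ℤ) : ℚ_[p])‖ ≤ 1 := Padic.norm_int_le_one _
    have h2 : ¬ ‖((ℓ : ℤ) : ℚ_[p])‖ < 1 := by
      rw [Padic.norm_intCast_lt_one_iff]
      intro hdvd
      exact hne ((Nat.prime_dvd_prime_iff_eq hp hℓ).mp (by exact_mod_cast hdvd))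
    push_cast at h1 h2 ⊢
    linarith [lt_or_eq_of_le h1]
  have hk_iff : ∀ k : ℕ, 1 ≤ k → k ≤ (p - 3) / 2 →
      (1 ≤ padicValRat p (Gnum ℓ k) ↔
        (1 ≤ padicValRat p (bernoulli (2 * k)) ∨ d ∣ k)) := by
    intro k hk1 hk2
    have h2k : 2 * k < p - 1 := by omega
    have hBne : bernoulli (2 * k) ≠ 0 := bernoulli_two_mul_ne_zero hk1
    have hBnorm : ‖((bernoulli (2 * k) : ℚ) : ℚ_[p])‖ ≤ 1 := bern_norm_le p hp3 h2k
    have hBpos : 0 < ‖((bernoulli (2 * k) : ℚ) : ℚ_[p])‖ :=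
      norm_pos_iff.mpr (by exact_mod_cast hBne)
    have h2ℓ : (2:ℚ) ≤ (ℓ:ℚ) := by exact_mod_cast hℓ.two_le
    have hℓpow : (1:ℚ) < (ℓ:ℚ) ^ (2 * k) := by
      apply one_lt_pow₀ (by linarith) (by omega)
    have hAne : (1 - (ℓ:ℚ) ^ (2 * k)) ≠ 0 := by intro h; rw [sub_eq_zero] at h; linarith
    have hGne : Gnum ℓ k ≠ 0 := by
      unfold Gnum
      exact mul_ne_zero (mul_ne_zero (by positivity) hAne) hBne
    have hAcast : (1 - (ℓ : ℚ_[p]) ^ (2 * k)) = (((1 - (ℓ:ℤ) ^ (2 * k)) : ℤ) : ℚ_[p]) := by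
      push_cast; ring
    have hAle : ‖(1 - (ℓ : ℚ_[p]) ^ (2 * k))‖ ≤ 1 := by
      rw [hAcast]; exact Padic.norm_int_le_one _
    have hApos : 0 < ‖(1 - (ℓ : ℚ_[p]) ^ (2 * k))‖ := by
      apply norm_pos_iff.mpr
      rw [show (1 - (ℓ : ℚ_[p]) ^ (2 * k)) = (((1 - (ℓ:ℚ) ^ (2 * k) : ℚ)) : ℚ_[p]) from by push_cast; ring]
      exact_mod_cast hAne
    have hA_iff : ‖(1 - (ℓ : ℚ_[p]) ^ (2 * k))‖ < 1 ↔ d ∣ k := by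
      rw [hAcast, Padic.norm_intCast_lt_one_iff, ← ZMod.intCast_zmod_eq_zero_iff_dvd]
      push_cast
      rw [sub_eq_zero, eq_comm, pow_mul, hd, orderOf_dvd_iff_pow_eq_one]
    have hGnorm : ‖((Gnum ℓ k : ℚ) : ℚ_[p])‖ =
        ‖(1 - (ℓ : ℚ_[p]) ^ (2 * k))‖ * ‖((bernoulli (2 * k) : ℚ) : ℚ_[p])‖ := by
      unfold Gnum
      push_cast
      rw [norm_mul, norm_mul]
      rw [show ((ℓ : ℚ_[p])) = (((ℓ:ℕ)) : ℚ_[p]) from by push_cast; ring, hℓnorm, one_mul]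
    rw [one_le_padicValRat_iff, one_le_padicValRat_iff]
    simp only [hGne, hBne, ne_eq, not_false_iff, true_and]
    rw [hGnorm, ← hA_iff]
    constructor
    · intro h
      by_contra hcon
      push_neg at hcon
      obtain ⟨hB1, hA1⟩ := hcon
      have h11 : (1:ℝ) * 1 ≤ ‖(1 - (ℓ : ℚ_[p]) ^ (2 * k))‖ * ‖((bernoulli (2 * k) : ℚ) : ℚ_[p])‖ :=
        mul_le_mul hA1 hB1 zero_le_one (le_trans zero_le_one hA1)
      rw [one_mul] at h11
      linarith
    · rintro (h | h)
      · calc ‖(1 - (ℓ : ℚ_[p]) ^ (2 * k))‖ * ‖((bernoulli (2 * k) : ℚ) : ℚ_[p])‖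
            ≤ 1 * ‖((bernoulli (2 * k) : ℚ) : ℚ_[p])‖ := by
              apply mul_le_mul_of_nonneg_right hAle hBpos.le
          _ = ‖((bernoulli (2 * k) : ℚ) : ℚ_[p])‖ := one_mul _
          _ < 1 := h
      · calc ‖(1 - (ℓ : ℚ_[p]) ^ (2 * k))‖ * ‖((bernoulli (2 * k) : ℚ) : ℚ_[p])‖
            ≤ ‖(1 - (ℓ : ℚ_[p]) ^ (2 * k))‖ * 1 := by
              apply mul_le_mul_of_nonneg_left hBnorm hApos.le
          _ = ‖(1 - (ℓ : ℚ_[p]) ^ (2 * k))‖ := mul_one _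
          _ < 1 := h
  have hGI : GenocchiIrregular ℓ p ↔
      (BIrregular p ∨ ∃ k, 1 ≤ k ∧ k ≤ (p - 3) / 2 ∧ d ∣ k) := by
    constructor
    · rintro ⟨k, h1, h2, h3⟩
      rcases (hk_iff k h1 h2).mp h3 with h | h
      · exact Or.inl ⟨k, h1, h2, h⟩
      · exact Or.inr ⟨k, h1, h2, h⟩
    · rintro (⟨k, h1, h2, h3⟩ | ⟨k, h1, h2, h3⟩)
      · exact ⟨k, h1, h2, (hk_iff k h1 h2).mpr (Or.inl h3)⟩
      · exact ⟨k, h1, h2, (hk_iff k h1 h2).mpr (Or.inr h3)⟩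
  have hord : (∃ k, 1 ≤ k ∧ k ≤ (p - 3) / 2 ∧ d ∣ k) ↔ d ≠ (p - 1) / 2 := by
    constructor
    · rintro ⟨k, h1, h2, h3⟩ hEq
      have := Nat.le_of_dvd (by omega) h3
      omega
    · intro hne2
      refine ⟨d, hdpos, ?_, dvd_rfl⟩
      have hdle := Nat.le_of_dvd (by omega) hdd
      rcases hdd with ⟨c, hc⟩
      rcases Nat.lt_or_ge d ((p - 1) / 2) with h | h
      · omega
      · omega
  rw [hGI, not_or, hord, not_ne_iff]
end

section
/- Let ℓ and p be distinct primes. If p ≡ 1 (mod 4) and the Legendre symbol (ℓ/p) = 1, then p is ℓ-Genocchi irregular. -/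
/-- Even-indexed Bernoulli numbers are nonzero (via the zeta values formula). -/
lemma bern_two_mul_ne_zero {k : ℕ} (hk : k ≠ 0) : bernoulli (2 * k) ≠ 0 := by
  intro h
  have hs := hasSum_zeta_nat hk
  rw [h] at hs
  simp only [Rat.cast_zero, mul_zero, zero_div] at hs
  have h1 : (fun n : ℕ => 1 / (n : ℝ) ^ (2 * k)) 1 ≤ 0 :=
    hs.tsum_eq ▸ Summable.le_tsum hs.summable 1 (fun j _ => by positivity)
  norm_num at h1

/-- A (weak form of the) von Staudt–Clausen theorem: if `m < p - 1` then `p`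
does not divide the denominator of the Bernoulli number `B_m`. -/
lemma padicNorm_bernoulli_le_one (p : ℕ) [hp : Fact p.Prime] :
    ∀ m : ℕ, m < p - 1 → padicNorm p (bernoulli m) ≤ 1 := by
  intro m
  induction m using Nat.strong_induction_on with
  | _ m IH =>
    intro hm
    have hppos : (0:ℚ) < p := by exact_mod_cast hp.out.pos
    have hp1 : (1:ℚ) < p := by exact_mod_cast hp.out.one_lt
    have hmp : m + 1 < p := by omega
    have hm1 : ((m:ℚ) + 1) ≠ 0 := by positivity
    have hF := _root_.sum_range_pow p m
    rw [Finset.sum_range_succ] at hF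
    have hlast : (bernoulli m) * ((m+1).choose m : ℚ) * (p:ℚ) ^ (m + 1 - m) / (m+1)
        = bernoulli m * p := by
      rw [Nat.choose_succ_self_right]
      have h1 : m + 1 - m = 1 := by omega
      rw [h1]
      push_cast
      field_simp
    rw [hlast] at hF
    set T : ℚ := ∑ i ∈ Finset.range m,
        bernoulli i * ((m + 1).choose i : ℚ) * (p:ℚ) ^ (m + 1 - i) / (m + 1) with hT
    set S : ℚ := ∑ k ∈ Finset.range p, (k : ℚ) ^ m with hS
    have key : (bernoulli m) * (p:ℚ) = S - T := by rw [hF]; ring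
    -- bound on `S`: the power sum `∑_{k<p} k^m` is divisible by `p`
    have hSdvd : (p:ℤ) ∣ ((∑ k ∈ Finset.range p, k ^ m : ℕ) : ℤ) := by
      haveI : NeZero p := ⟨hp.out.pos.ne'⟩
      have hz : ((∑ k ∈ Finset.range p, k ^ m : ℕ) : ZMod p) = 0 := by
        push_cast
        have hre : (∑ k ∈ Finset.range p, (k : ZMod p) ^ m) = ∑ x : ZMod p, x ^ m := by
          refine Finset.sum_nbij' (fun i : ℕ => (i : ZMod p)) (fun x : ZMod p => x.val)
            (fun a _ => Finset.mem_univ _)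
            (fun x _ => Finset.mem_range.mpr (ZMod.val_lt x))
            (fun a ha => ZMod.val_cast_of_lt (Finset.mem_range.mp ha))
            (fun x _ => ZMod.natCast_rightInverse x)
            (fun a _ => rfl)
        rw [hre]
        exact FiniteField.sum_pow_lt_card_sub_one (K := ZMod p) m (by rw [ZMod.card]; omega)
      exact_mod_cast (ZMod.natCast_eq_zero_iff _ p).mp hz
    have hSnorm : padicNorm p S ≤ (p:ℚ)⁻¹ := by
      have hcast : S = (((∑ k ∈ Finset.range p, k ^ m : ℕ) : ℤ) : ℚ) := by push_cast; rfl
      rw [hcast]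
      have h := (padicNorm.dvd_iff_norm_le (p := p)
        (n := 1) (z := ((∑ k ∈ Finset.range p, k ^ m : ℕ) : ℤ))).mp (by simpa using hSdvd)
      simpa using h
    -- bound on `T` via the inductive hypothesis
    have hTnorm : padicNorm p T ≤ (p:ℚ)⁻¹ := by
      apply padicNorm.sum_le' _ (by positivity)
      intro i hi
      have him : i < m := Finset.mem_range.mp hi
      have hb : padicNorm p (bernoulli i) ≤ 1 := IH i him (by omega)
      have hc : padicNorm p (((m+1).choose i : ℕ) : ℚ) ≤ 1 := padicNorm.of_nat _
      have hpw : padicNorm p ((p:ℚ) ^ (m + 1 - i)) ≤ (p:ℚ)⁻¹ := by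
        have hdvd : ((p:ℤ)) ^ 1 ∣ (p:ℤ) ^ (m + 1 - i) := pow_dvd_pow _ (by omega)
        have h := (padicNorm.dvd_iff_norm_le (p := p)
          (n := 1) (z := (p:ℤ) ^ (m + 1 - i))).mp (by exact_mod_cast hdvd)
        have hc2 : (((p:ℤ) ^ (m + 1 - i) : ℤ) : ℚ) = (p:ℚ) ^ (m + 1 - i) := by push_cast; rfl
        rw [hc2] at h
        simpa using h
      have hd : padicNorm p ((m:ℚ) + 1) = 1 := by
        have hmm : ((m:ℚ) + 1) = ((m+1 : ℕ) : ℚ) := by push_cast; ring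
        rw [hmm, padicNorm.nat_eq_one_iff]
        intro hdvd
        exact absurd (Nat.le_of_dvd (by omega) hdvd) (by omega)
      rw [padicNorm.div, padicNorm.mul, padicNorm.mul, hd, div_one]
      calc padicNorm p (bernoulli i) * padicNorm p (((m+1).choose i : ℕ) : ℚ)
            * padicNorm p ((p:ℚ) ^ (m + 1 - i))
          ≤ 1 * 1 * (p:ℚ)⁻¹ := by
            gcongr
            all_goals exact padicNorm.nonneg _
        _ = (p:ℚ)⁻¹ := by ring
    have hfinal : padicNorm p (bernoulli m) * (p:ℚ)⁻¹ ≤ (p:ℚ)⁻¹ := by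
      have h : padicNorm p (bernoulli m * (p:ℚ)) ≤ (p:ℚ)⁻¹ := by
        rw [key]
        exact le_trans padicNorm.sub (max_le hSnorm hTnorm)
      rwa [padicNorm.mul, padicNorm.padicNorm_p_of_prime] at h
    have hpinv : (0:ℚ) < (p:ℚ)⁻¹ := by positivity
    nlinarith [padicNorm.nonneg (p := p) (bernoulli m)]

/-- Let `ℓ` and `p` be distinct primes. If `p ≡ 1 (mod 4)` and the Legendre
symbol `(ℓ/p)` equals `1`, then `p` is `ℓ`-Genocchi irregular. -/
theorem genocchiIrregular_of_one_mod_four (ℓ p : ℕ) (hℓ : ℓ.Prime)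
    [hp : Fact p.Prime] (hne : ℓ ≠ p) (h4 : p % 4 = 1)
    (hleg : legendreSym p ℓ = 1) :
    GenocchiIrregular ℓ p := by
  have hp2 : 2 ≤ p := hp.out.two_le
  have hp5 : 5 ≤ p := by
    rcases Nat.lt_or_ge p 5 with h | h
    · interval_cases p <;> simp_all (config := {decide := true})
    · exact h
  set k : ℕ := (p - 1) / 4 with hk
  have h2k : 2 * k = p / 2 := by omega
  refine ⟨k, by omega, by omega, ?_⟩
  -- nonvanishing of the three factors
  have hℓ0 : (ℓ : ℚ) ≠ 0 := by exact_mod_cast hℓ.pos.ne'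
  have hℓ1 : (1 : ℚ) < (ℓ : ℚ) ^ (2 * k) := by
    apply one_lt_pow₀ (by exact_mod_cast hℓ.one_lt) (by omega)
  have hfac : (1 - (ℓ : ℚ) ^ (2 * k)) ≠ 0 := by intro h; nlinarith
  have hb : bernoulli (2 * k) ≠ 0 := bern_two_mul_ne_zero (by omega)
  -- `p` divides `1 - ℓ^(2k)` by Euler's criterion
  haveI : NeZero p := ⟨hp.out.pos.ne'⟩
  have hpow : ((ℓ : ℤ) : ZMod p) ^ (p / 2) = 1 := by
    have h := legendreSym.eq_pow p (ℓ : ℤ)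
    rw [hleg] at h
    exact_mod_cast h.symm
  have hzdvd : (p : ℤ) ∣ (1 - (ℓ : ℤ) ^ (2 * k)) := by
    have hz : ((1 - (ℓ : ℤ) ^ (2 * k) : ℤ) : ZMod p) = 0 := by
      push_cast
      rw [← h2k] at hpow
      push_cast at hpow
      rw [hpow]; ring
    exact (ZMod.intCast_zmod_eq_zero_iff_dvd _ p).mp hz
  have hzne : (1 - (ℓ : ℤ) ^ (2 * k)) ≠ 0 := by
    intro h
    apply hfac
    have hc : ((1 - (ℓ : ℤ) ^ (2 * k) : ℤ) : ℚ) = 1 - (ℓ : ℚ) ^ (2 * k) := by push_cast; ring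
    rw [← hc, h]; simp
  -- the three valuations
  have v1 : padicValRat p (ℓ : ℚ) = 0 := by
    rw [padicValRat.of_nat]
    exact_mod_cast padicValNat.eq_zero_of_not_dvd
      (fun h => hne ((Nat.prime_dvd_prime_iff_eq hp.out hℓ).mp h).symm)
  have v2 : 1 ≤ padicValRat p (1 - (ℓ : ℚ) ^ (2 * k)) := by
    have hcast : (1 - (ℓ : ℚ) ^ (2 * k)) = ((1 - (ℓ : ℤ) ^ (2 * k) : ℤ) : ℚ) := by
      push_cast; ring
    rw [hcast, padicValRat.of_int]
    have h := (padicValInt_dvd_iff (p := p) 1 (1 - (ℓ : ℤ) ^ (2 * k))).mp (by simpa using hzdvd)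
    rcases h with h | h
    · exact absurd h hzne
    · exact_mod_cast h
  have v3 : 0 ≤ padicValRat p (bernoulli (2 * k)) := by
    have hn := padicNorm_bernoulli_le_one p (2 * k) (by omega)
    rw [padicNorm.eq_zpow_of_nonzero hb] at hn
    by_contra hneg
    push_neg at hneg
    have hp1 : (1 : ℚ) < p := by exact_mod_cast hp.out.one_lt
    have hlt : (1 : ℚ) < (p : ℚ) ^ (-padicValRat p (bernoulli (2 * k))) :=
      one_lt_zpow₀ hp1 (by omega)
    linarith
  have hmul : padicValRat p (Gnum ℓ k) =
      padicValRat p (ℓ : ℚ) + padicValRat p (1 - (ℓ : ℚ) ^ (2 * k))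
        + padicValRat p (bernoulli (2 * k)) := by
    unfold Gnum
    rw [padicValRat.mul (mul_ne_zero hℓ0 hfac) hb, padicValRat.mul hℓ0 hfac]
  omega
end
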